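/- Let k ≥ 4 and 0 < θ < 1 (ferromagnetic case). If either θ ≥ (k−1)/k, or θ < (k−1)/k and λ < 1/(k−1−kθ), then the fixed-point system (★) has exactly one positive solution. -/
import Mathlib

private lemma pow_sub_pow_le' (m : ℕ) {g f : ℝ} (hg : 0 ≤ g) (hgf : g ≤ f) :
    f ^ (m + 1) - g ^ (m + 1) ≤ ((m : ℝ) + 1) * f ^ m * (f - g) := by
  induction m with
  | zero => simp
  | succ n ih =>
    have hf : 0 ≤ f := hg.trans hgf
    have h1 : g ^ (n + 1) ≤ f ^ (n + 1) := pow_le_pow_left₀ hg hgf _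
    have h2 : f * (f ^ (n + 1) - g ^ (n + 1)) ≤ f * (((n : ℝ) + 1) * f ^ n * (f - g)) :=
      mul_le_mul_of_nonneg_left ih hf
    have h3 : g ^ (n + 1) * (f - g) ≤ f ^ (n + 1) * (f - g) :=
      mul_le_mul_of_nonneg_right h1 (by linarith)
    have key : f ^ (n + 2) - g ^ (n + 2)
        = f * (f ^ (n + 1) - g ^ (n + 1)) + g ^ (n + 1) * (f - g) := by ring
    have : f * (((n : ℝ) + 1) * f ^ n * (f - g)) + f ^ (n + 1) * (f - g)
        = ((n : ℝ) + 1 + 1) * f ^ (n + 1) * (f - g) := by ring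
    push_cast
    rw [key]
    linarith

private lemma no_asym (m : ℕ) (lam θ x y : ℝ) (hlam : 0 < lam)
    (hθ0 : 0 < θ) (hθ1 : θ < 1)
    (hcond : ((m : ℝ) + 1 - 1) / ((m : ℝ) + 1) ≤ θ ∨
      (θ < ((m : ℝ) + 1 - 1) / ((m : ℝ) + 1) ∧
        lam < 1 / ((m : ℝ) + 1 - 1 - ((m : ℝ) + 1) * θ)))
    (hx : 0 < x) (hy : 0 < y)
    (hex : x * (1 + x + y) ^ (m + 1) = lam * (1 + x + θ * y) ^ (m + 1))
    (hey : y * (1 + x + y) ^ (m + 1) = lam * (1 + θ * x + y) ^ (m + 1))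
    (hyx : y < x) : False := by
  have hs : (0:ℝ) < 1 + x + y := by linarith
  have ha : (0:ℝ) < 1 + x + θ * y := by nlinarith
  have hb : (0:ℝ) < 1 + θ * x + y := by nlinarith
  have hba : 1 + θ * x + y < 1 + x + θ * y := by nlinarith
  have has : 1 + x + θ * y < 1 + x + y := by nlinarith
  have hS : (0:ℝ) < (1 + x + y) ^ (m + 1) := by positivity
  have hKpos : (0:ℝ) < (m : ℝ) + 1 := by positivity
  have hxlam : x < lam := by
    have h1 : (1 + x + θ * y) ^ (m + 1) < (1 + x + y) ^ (m + 1) :=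
      pow_lt_pow_left₀ has ha.le (by omega)
    have h2 := mul_lt_mul_of_pos_left h1 hlam
    rw [← hex] at h2
    exact lt_of_mul_lt_mul_right h2 hS.le
  have key : ((m : ℝ) + 1) * (1 - θ) * x < 1 + x + θ * y := by
    rcases hcond with h | ⟨h1, h2⟩
    · rw [div_le_iff₀ hKpos] at h
      have h' : ((m : ℝ) + 1) * (1 - θ) ≤ 1 := by nlinarith
      nlinarith [mul_le_mul_of_nonneg_right h' hx.le, mul_pos hθ0 hy]
    · have hd : (0:ℝ) < (m : ℝ) + 1 - 1 - ((m : ℝ) + 1) * θ := by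
        rw [lt_div_iff₀ hKpos] at h1; nlinarith
      have h2' : lam * ((m : ℝ) + 1 - 1 - ((m : ℝ) + 1) * θ) < 1 := by
        rw [lt_div_iff₀ hd] at h2; nlinarith
      nlinarith [mul_lt_mul_of_pos_right hxlam hd, mul_pos hθ0 hy]
  have hpow := pow_sub_pow_le' m hb.le hba.le
  have hmul : lam * (1 + x + θ * y) *
        ((1 + x + θ * y) ^ (m + 1) - (1 + θ * x + y) ^ (m + 1)) ≤
      lam * (1 + x + θ * y) *
        (((m : ℝ) + 1) * (1 + x + θ * y) ^ m * ((1 + x + θ * y) - (1 + θ * x + y))) :=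
    mul_le_mul_of_nonneg_left hpow (by positivity)
  have hL : lam * (1 + x + θ * y) *
        ((1 + x + θ * y) ^ (m + 1) - (1 + θ * x + y) ^ (m + 1))
      = (1 + x + θ * y) * ((x - y) * (1 + x + y) ^ (m + 1)) := by
    linear_combination (-(1 + x + θ * y)) * hex + (1 + x + θ * y) * hey
  have hR : lam * (1 + x + θ * y) *
        (((m : ℝ) + 1) * (1 + x + θ * y) ^ m * ((1 + x + θ * y) - (1 + θ * x + y)))
      = ((m : ℝ) + 1) * (1 - θ) * x * ((x - y) * (1 + x + y) ^ (m + 1)) := by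
    linear_combination (-(((m : ℝ) + 1) * (1 - θ) * (x - y))) * hex
  rw [hL, hR] at hmul
  have hpos2 : 0 < (x - y) * (1 + x + y) ^ (m + 1) :=
    mul_pos (sub_pos.mpr hyx) hS
  nlinarith [mul_lt_mul_of_pos_right key hpos2]

private lemma diag_lt_false (k : ℕ) (hk : k ≠ 0) (lam θ : ℝ) (hlam : 0 < lam)
    (hθ0 : 0 < θ) (hθ1 : θ < 1) {a b : ℝ} (ha : 0 < a) (hb : 0 < b)
    (hA : a * (1 + 2 * a) ^ k = lam * (1 + (1 + θ) * a) ^ k)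
    (hB : b * (1 + 2 * b) ^ k = lam * (1 + (1 + θ) * b) ^ k)
    (hab : a < b) : False := by
  have hu : (0:ℝ) < 1 + (1 + θ) * a := by nlinarith
  have hv : (0:ℝ) < 1 + 2 * a := by linarith
  have hp : (0:ℝ) < 1 + (1 + θ) * b := by nlinarith
  have hq : (0:ℝ) < 1 + 2 * b := by linarith
  have hlt : (1 + (1 + θ) * b) * (1 + 2 * a) < (1 + (1 + θ) * a) * (1 + 2 * b) := by
    nlinarith
  have hltk : ((1 + (1 + θ) * b) * (1 + 2 * a)) ^ k
      < ((1 + (1 + θ) * a) * (1 + 2 * b)) ^ k :=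
    pow_lt_pow_left₀ hlt (by positivity) hk
  rw [mul_pow, mul_pow] at hltk
  have h1 : lam * ((1 + (1 + θ) * b) ^ k * (1 + 2 * a) ^ k)
      < lam * ((1 + (1 + θ) * a) ^ k * (1 + 2 * b) ^ k) :=
    mul_lt_mul_of_pos_left hltk hlam
  have e1 : lam * ((1 + (1 + θ) * b) ^ k * (1 + 2 * a) ^ k)
      = b * ((1 + 2 * b) ^ k * (1 + 2 * a) ^ k) := by
    linear_combination (-(1 + 2 * a) ^ k) * hB
  have e2 : lam * ((1 + (1 + θ) * a) ^ k * (1 + 2 * b) ^ k)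
      = a * ((1 + 2 * b) ^ k * (1 + 2 * a) ^ k) := by
    linear_combination (-(1 + 2 * b) ^ k) * hA
  rw [e1, e2] at h1
  have hpos : (0:ℝ) < (1 + 2 * b) ^ k * (1 + 2 * a) ^ k := by positivity
  have : b < a := lt_of_mul_lt_mul_right h1 hpos.le
  linarith

private lemma diag_exists (k : ℕ) (hk : k ≠ 0) (lam θ : ℝ) (hlam : 0 < lam)
    (hθ0 : 0 < θ) (hθ1 : θ < 1) :
    ∃ c : ℝ, 0 < c ∧ c * (1 + 2 * c) ^ k = lam * (1 + (1 + θ) * c) ^ k := by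
  set F : ℝ → ℝ := fun t => t * (1 + 2 * t) ^ k - lam * (1 + (1 + θ) * t) ^ k with hF
  have hcont : Continuous F := by
    apply Continuous.sub
    · exact continuous_id'.mul ((continuous_const.add (continuous_const.mul continuous_id')).pow k)
    · exact continuous_const.mul ((continuous_const.add (continuous_const.mul continuous_id')).pow k)
  have hF0 : F 0 = -lam := by simp [hF]
  have hFl : 0 < F lam := by
    have h1 : (0:ℝ) < 1 + (1 + θ) * lam := by nlinarith
    have h2 : 1 + (1 + θ) * lam < 1 + 2 * lam := by nlinarith
    have h3 : (1 + (1 + θ) * lam) ^ k < (1 + 2 * lam) ^ k :=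
      pow_lt_pow_left₀ h2 h1.le hk
    have : F lam = lam * ((1 + 2 * lam) ^ k - (1 + (1 + θ) * lam) ^ k) := by
      simp [hF]; ring
    rw [this]
    have := sub_pos.mpr h3
    positivity
  have hmem : (0:ℝ) ∈ Set.Icc (F 0) (F lam) := ⟨by rw [hF0]; linarith, hFl.le⟩
  obtain ⟨c, hc, hFc⟩ := intermediate_value_Icc hlam.le hcont.continuousOn hmem
  refine ⟨c, ?_, by have := hFc; simp only [hF] at this; linarith⟩
  rcases eq_or_lt_of_le hc.1 with h | h
  · exfalso; rw [← h] at hFc; rw [hF0] at hFc; linarith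
  · exact h

/-- Ferromagnetic case, `k ≥ 4`: if `θ ≥ (k−1)/k`, or `θ < (k−1)/k` and
`λ < 1/(k−1−kθ)`, then (★) has exactly one positive solution. -/
theorem stmt_14 (k : ℕ) (hk : 4 ≤ k) (lam θ : ℝ) (hlam : 0 < lam)
    (hθ0 : 0 < θ) (hθ1 : θ < 1)
    (hcond : ((k : ℝ) - 1) / k ≤ θ ∨
      (θ < ((k : ℝ) - 1) / k ∧ lam < 1 / ((k : ℝ) - 1 - k * θ))) :
    {p : ℝ × ℝ | 0 < p.1 ∧ 0 < p.2 ∧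
      p.1 = lam * ((1 + p.1 + θ * p.2) / (1 + p.1 + p.2)) ^ k ∧
      p.2 = lam * ((1 + θ * p.1 + p.2) / (1 + p.1 + p.2)) ^ k}.encard = 1 := by
  obtain ⟨m, rfl⟩ : ∃ m, k = m + 1 := ⟨k - 1, by omega⟩
  push_cast at hcond
  obtain ⟨c, hc0, hceq⟩ := diag_exists (m + 1) (by omega) lam θ hlam hθ0 hθ1
  rw [Set.encard_eq_one]
  refine ⟨(c, c), ?_⟩
  ext ⟨x, y⟩
  simp only [Set.mem_setOf_eq, Set.mem_singleton_iff, Prod.mk.injEq]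
  constructor
  · rintro ⟨hx, hy, hex, hey⟩
    have hs : (0:ℝ) < 1 + x + y := by linarith
    have hsk : ((1 + x + y) ^ (m + 1) : ℝ) ≠ 0 := by positivity
    rw [div_pow, ← mul_div_assoc, eq_div_iff hsk] at hex hey
    have hxy : x = y := by
      rcases lt_trichotomy x y with h | h | h
      · exfalso
        apply no_asym m lam θ y x hlam hθ0 hθ1 hcond hy hx ?_ ?_ h
        · linear_combination hey
        · linear_combination hex
      · exact h
      · exact absurd (no_asym m lam θ x y hlam hθ0 hθ1 hcond hx hy hex hey h) id
    subst hxy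
    have hdiag : x * (1 + 2 * x) ^ (m + 1) = lam * (1 + (1 + θ) * x) ^ (m + 1) := by
      linear_combination hex
    have hxc : x = c := by
      rcases lt_trichotomy x c with h | h | h
      · exact absurd (diag_lt_false (m + 1) (by omega) lam θ hlam hθ0 hθ1 hx hc0
          hdiag hceq h) id
      · exact h
      · exact absurd (diag_lt_false (m + 1) (by omega) lam θ hlam hθ0 hθ1 hc0 hx
          hceq hdiag h) id
    exact ⟨hxc, hxc⟩
  · rintro ⟨rfl, rfl⟩
    refine ⟨hc0, hc0, ?_, ?_⟩
    · rw [div_pow, ← mul_div_assoc, eq_div_iff (by positivity)]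
      linear_combination hceq
    · rw [div_pow, ← mul_div_assoc, eq_div_iff (by positivity)]
      linear_combination hceq
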